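/- arXiv:0805.3350 — 2 statements merged into one kernel-verified Lean document; each statement's English description precedes it below -/
import Mathlib

section
/- Let C be any category and A : Δ_* ⥤ C a functor. Then the object A([−1]_*), together with the maps A([−1]_*) → A([n]_*) induced by the unique morphisms [−1]_* → [n]_* for n ≥ 0, is a limit cone over the cosimplicial object obtained by restricting A to the simplex category Δ (the full subcategory of Δ_* on the objects [n]_* with n ≥ 0 and the morphisms that send no non-basepoint element to the basepoint). -/
/-!
The category `Δ_*` of pointed ordered sets `[n]_* = {0, …, n} ⊔ {*}` for
`n ∈ {-1, 0, 1, …}`, with basepoint `*` as greatest element and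
order-preserving basepoint-preserving maps.  The object `⟨k⟩ : DeltaStar`
represents `[k - 1]_*`, realized as `Fin (k + 1)` with basepoint the top
element; so `⟨0⟩` is `[-1]_*` and `⟨n + 1⟩` is `[n]_*`.

The simplex category `Δ` embeds into `Δ_*` by `[n] ↦ [n]_*`, a monotone map
`f : [n] → [m]` being extended by `* ↦ *`; under this embedding the image
morphisms are exactly those under which the preimage of the basepoint is the
basepoint.
-/

open CategoryTheory

/-- Objects of `Δ_*`: the object `⟨k⟩` represents `[k - 1]_*`. -/
structure DeltaStar : Type where
  len : ℕ

namespace DeltaStar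

/-- Morphisms are order-preserving maps sending the basepoint (the top
element) to the basepoint. -/
instance : Category DeltaStar where
  Hom X Y := { f : Fin (X.len + 1) →o Fin (Y.len + 1) // f (Fin.last X.len) = Fin.last Y.len }
  id X := ⟨OrderHom.id, rfl⟩
  comp f g := ⟨g.1.comp f.1, by
    show g.1 (f.1 _) = _
    rw [f.2, g.2]⟩
  id_comp f := Subtype.ext (OrderHom.comp_id f.1)
  comp_id f := Subtype.ext (OrderHom.id_comp f.1)
  assoc f g h := Subtype.ext rfl

/-- Extension of a monotone map `[n] → [m]` to a pointed monotone map
`[n]_* → [m]_*` sending the basepoint to the basepoint. -/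
def extendFun {n m : ℕ} (f : Fin (n + 1) →o Fin (m + 1)) :
    Fin (n + 2) →o Fin (m + 2) where
  toFun i := if h : i.val < n + 1 then (f ⟨i.val, h⟩).castSucc else Fin.last (m + 1)
  monotone' := by
    intro a b hab
    have hab' : (a : ℕ) ≤ b := hab
    dsimp only
    split_ifs with ha hb hb
    · exact Fin.castSucc_le_castSucc_iff.mpr
        (f.monotone (show (⟨a.val, ha⟩ : Fin (n + 1)) ≤ ⟨b.val, hb⟩ from hab'))
    · exact Fin.le_last _
    · omega
    · exact le_refl _

lemma extendFun_of_lt {n m : ℕ} (f : Fin (n + 1) →o Fin (m + 1)) (i : Fin (n + 2))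
    (h : i.val < n + 1) : extendFun f i = (f ⟨i.val, h⟩).castSucc := dif_pos h

lemma extendFun_of_not_lt {n m : ℕ} (f : Fin (n + 1) →o Fin (m + 1)) (i : Fin (n + 2))
    (h : ¬ i.val < n + 1) : extendFun f i = Fin.last (m + 1) := dif_neg h

lemma extendFun_id {n : ℕ} :
    extendFun (OrderHom.id : Fin (n + 1) →o Fin (n + 1)) = OrderHom.id := by
  apply OrderHom.ext
  funext i
  by_cases h : i.val < n + 1
  · rw [extendFun_of_lt _ i h]
    exact Fin.ext (by simp)
  · rw [extendFun_of_not_lt _ i h]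
    have := i.isLt
    exact Fin.ext (by simp only [Fin.val_last, OrderHom.id_coe, id_eq]; omega)

lemma extendFun_comp {n m l : ℕ} (f : Fin (n + 1) →o Fin (m + 1))
    (g : Fin (m + 1) →o Fin (l + 1)) :
    extendFun (g.comp f) = (extendFun g).comp (extendFun f) := by
  apply OrderHom.ext
  funext i
  simp only [OrderHom.comp_coe, Function.comp_apply]
  by_cases h : i.val < n + 1
  · rw [extendFun_of_lt _ i h, extendFun_of_lt f i h,
      extendFun_of_lt g _ (by simp; have := (f ⟨i.val, h⟩).isLt; omega)]
    simp only [OrderHom.comp_coe, Function.comp_apply]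
    exact congrArg Fin.castSucc (congrArg (⇑g) (Fin.ext (by simp)))
  · rw [extendFun_of_not_lt _ i h, extendFun_of_not_lt f i h,
      extendFun_of_not_lt g _ (by simp)]

/-- The embedding `Δ ⥤ Δ_*`, sending `[n]` to `[n]_*` (the object `⟨n + 1⟩`
in our indexing) and a monotone map `f : [n] → [m]` to its extension fixing
the basepoint. -/
def emb : SimplexCategory ⥤ DeltaStar where
  obj n := ⟨n.len + 1⟩
  map {n m} f := ⟨extendFun f.toOrderHom, extendFun_of_not_lt _ _ (by simp)⟩
  map_id n := Subtype.ext (by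
    show extendFun (SimplexCategory.Hom.toOrderHom (𝟙 n)) = OrderHom.id
    rw [SimplexCategory.id_toOrderHom, extendFun_id])
  map_comp {n m l} f g := Subtype.ext (by
    show extendFun (SimplexCategory.Hom.toOrderHom (f ≫ g)) = _
    rw [SimplexCategory.comp_toOrderHom, extendFun_comp]
    rfl)

/-- The unique morphism `[-1]_* → [n]_*` in `Δ_*`. -/
def fromNegOne (n : SimplexCategory) : (⟨0⟩ : DeltaStar) ⟶ emb.obj n :=
  ⟨⟨fun _ => Fin.last (n.len + 1), monotone_const⟩, rfl⟩

lemma fromNegOne_naturality {n m : SimplexCategory} (f : n ⟶ m) :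
    fromNegOne n ≫ emb.map f = fromNegOne m := by
  apply Subtype.ext
  apply OrderHom.ext
  funext i
  show (emb.map f).1 (Fin.last (n.len + 1)) = Fin.last (m.len + 1)
  exact (emb.map f).2

variable {C : Type*} [Category C]

/-- The cone over the cosimplicial object `A|_Δ = emb ⋙ A` with apex
`A([-1]_*)`, whose legs are induced by the unique morphisms
`[-1]_* → [n]_*`. -/
def negOneCone (A : DeltaStar ⥤ C) : Limits.Cone (emb ⋙ A) where
  pt := A.obj ⟨0⟩
  π :=
    { app := fun n => A.map (fromNegOne n)
      naturality := fun n m f => by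
        dsimp
        rw [Category.id_comp, ← A.map_comp, fromNegOne_naturality] }

end DeltaStar

namespace DeltaStar

/-- The unique morphism `[0]_* → [-1]_*`. -/
def retr : emb.obj (SimplexCategory.mk 0) ⟶ (⟨0⟩ : DeltaStar) :=
  ⟨⟨fun _ => 0, monotone_const⟩, Subsingleton.elim (α := Fin 1) _ _⟩

lemma fromNegOne_retr : fromNegOne (SimplexCategory.mk 0) ≫ retr = 𝟙 (⟨0⟩ : DeltaStar) := by
  apply Subtype.ext
  apply OrderHom.ext
  funext i
  exact Subsingleton.elim (α := Fin 1) _ _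

/-- The morphism `[1]_* → [0]_*` sending `0 ↦ 0`, `1 ↦ *`, `* ↦ *`; it is not
in the image of `emb`. -/
def w21 : emb.obj (SimplexCategory.mk 1) ⟶ emb.obj (SimplexCategory.mk 0) :=
  ⟨⟨fun i => if i.val = 0 then 0 else 1, by
    intro a b hab
    have hab' : (a : ℕ) ≤ b := hab
    dsimp only
    split_ifs with ha hb
    · exact le_refl _
    · exact Fin.zero_le _
    · omega
    · exact le_refl _⟩, rfl⟩

/-- The constant map `[0] → [1]` at `1`, as a morphism of `Δ`. -/
def d0 : SimplexCategory.mk 0 ⟶ SimplexCategory.mk 1 :=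
  SimplexCategory.Hom.mk ⟨fun _ => 1, monotone_const⟩

/-- The constant map `[0] → [1]` at `0`, as a morphism of `Δ`. -/
def d1 : SimplexCategory.mk 0 ⟶ SimplexCategory.mk 1 :=
  SimplexCategory.Hom.mk ⟨fun _ => 0, monotone_const⟩

/-- The constant map `[0] → [n]` at `0`, as a morphism of `Δ`. -/
def constf (n : SimplexCategory) : SimplexCategory.mk 0 ⟶ n :=
  SimplexCategory.Hom.mk ⟨fun _ => 0, monotone_const⟩

lemma d1_w21 : emb.map d1 ≫ w21 = 𝟙 (emb.obj (SimplexCategory.mk 0)) := by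
  apply Subtype.ext
  apply OrderHom.ext
  funext i
  fin_cases i <;> rfl

lemma d0_w21 : emb.map d0 ≫ w21 = retr ≫ fromNegOne (SimplexCategory.mk 0) := by
  apply Subtype.ext
  apply OrderHom.ext
  funext i
  fin_cases i <;> rfl

variable {C : Type*} [Category C]

lemma cone_key (A : DeltaStar ⥤ C) (s : Limits.Cone (emb ⋙ A)) :
    s.π.app (SimplexCategory.mk 0) ≫ A.map (retr ≫ fromNegOne (SimplexCategory.mk 0)) =
      s.π.app (SimplexCategory.mk 0) := by
  rw [← d0_w21, A.map_comp, ← Category.assoc]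
  have h0 := s.w d0
  have h1 := s.w d1
  dsimp only [Functor.comp_map] at h0 h1
  rw [h0, ← h1, Category.assoc, ← A.map_comp, d1_w21, A.map_id]
  exact Category.comp_id _

end DeltaStar

open DeltaStar in
/-- For any `Δ_*`-diagram `A` in any category `C`, the object `A([-1]_*)`,
together with the maps to `A([n]_*)` induced by the unique morphisms
`[-1]_* → [n]_*` for `n ≥ 0`, is a limit cone over the cosimplicial object
obtained by restricting `A` along the embedding `Δ ⥤ Δ_*`. -/
theorem deltaStar_negOne_isLimit {C : Type*} [Category C] (A : DeltaStar ⥤ C) :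
    Nonempty (Limits.IsLimit (negOneCone A)) := by
  refine ⟨{ lift := fun s => s.π.app (SimplexCategory.mk 0) ≫ A.map retr, fac := ?_, uniq := ?_ }⟩
  · intro s n
    have hn : retr ≫ fromNegOne n =
        (retr ≫ fromNegOne (SimplexCategory.mk 0)) ≫ emb.map (constf n) := by
      rw [Category.assoc, fromNegOne_naturality]
    dsimp [negOneCone]
    rw [Category.assoc, ← A.map_comp, hn, A.map_comp, ← Category.assoc, cone_key]
    have := s.w (constf n)
    dsimp only [Functor.comp_map] at this
    rw [this]
  · intro s m hm
    have h0 := hm (SimplexCategory.mk 0)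
    dsimp [negOneCone] at h0
    rw [← h0]
    erw [Category.assoc, ← A.map_comp, fromNegOne_retr, A.map_id, Category.comp_id]
end

section
/- Let C and D be monoidal categories, F : C ⥤ D a strong monoidal functor admitting a right adjoint G : D ⥤ C, and suppose given an isomorphism α_{X,d} : G(F(X) ⊗ d) ≅ X ⊗ G(d), natural in X ∈ C and in d ∈ D (i.e. G is a C-module functor). Let u : E ⟶ E' be a morphism in C that is homologically phantom, meaning that for every object c of C the map Hom_C(𝟙_C, E ⊗ c) → Hom_C(𝟙_C, E' ⊗ c) given by postcomposition with u ⊗ id_c is zero. Then F(u) is homologically phantom in D: for every object d of D, the map Hom_D(𝟙_D, F(E) ⊗ d) → Hom_D(𝟙_D, F(E') ⊗ d) given by postcomposition with F(u) ⊗ id_d is zero. -/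
open CategoryTheory MonoidalCategory

/-- Let `F : C ⥤ D` be a strong monoidal functor between monoidal categories
(with zero morphisms) admitting a right adjoint `G`, and suppose given an
isomorphism `α_{X,d} : G(F(X) ⊗ d) ≅ X ⊗ G(d)` natural in `X ∈ C` and
`d ∈ D`, i.e. `G` is a `C`-module functor.  If `u : E ⟶ E'` in `C` is
homologically phantom — for every object `c` of `C`, postcomposition with
`u ⊗ id_c` is the zero map `Hom(𝟙_C, E ⊗ c) → Hom(𝟙_C, E' ⊗ c)` — then
`F(u)` is homologically phantom in `D`: for every object `d` of `D`,
postcomposition with `F(u) ⊗ id_d` is the zero map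
`Hom(𝟙_D, F(E) ⊗ d) → Hom(𝟙_D, F(E') ⊗ d)`. -/
theorem monoidal_leftAdjoint_preserves_homological_phantom
    {C D : Type*} [Category C] [Category D]
    [MonoidalCategory C] [MonoidalCategory D]
    [Limits.HasZeroMorphisms C] [Limits.HasZeroMorphisms D]
    (F : C ⥤ D) [F.Monoidal] (G : D ⥤ C) (adj : F ⊣ G)
    (α : ∀ (X : C) (d : D), G.obj (F.obj X ⊗ d) ≅ X ⊗ G.obj d)
    (natX : ∀ {X X' : C} (f : X ⟶ X') (d : D),
      G.map (F.map f ▷ d) ≫ (α X' d).hom = (α X d).hom ≫ (f ▷ G.obj d))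
    (natd : ∀ (X : C) {d d' : D} (k : d ⟶ d'),
      G.map (F.obj X ◁ k) ≫ (α X d').hom = (α X d).hom ≫ (X ◁ G.map k))
    {E E' : C} (u : E ⟶ E')
    (hu : ∀ (c : C) (g : 𝟙_ C ⟶ E ⊗ c), g ≫ (u ▷ c) = 0) :
    ∀ (d : D) (g : 𝟙_ D ⟶ F.obj E ⊗ d), g ≫ (F.map u ▷ d) = 0 := by
  intro d g
  have hG : G.map (F.map u ▷ d)
      = (α E d).hom ≫ (u ▷ G.obj d) ≫ (α E' d).inv := by
    rw [← Category.assoc, Iso.eq_comp_inv, natX]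
  have key : ∀ g' : 𝟙_ D ⟶ F.obj E ⊗ d,
      (adj.homEquiv (𝟙_ C) (F.obj E ⊗ d)) ((Functor.Monoidal.εIso F).inv ≫ g')
        ≫ G.map (F.map u ▷ d) = 0 := by
    intro g'
    rw [hG, ← Category.assoc, ← Category.assoc, hu, Limits.zero_comp]
  have h1 := key g
  have h2 := key 0
  rw [← h2] at h1
  have h3 : (adj.homEquiv (𝟙_ C) (F.obj E' ⊗ d))
        (((Functor.Monoidal.εIso F).inv ≫ g) ≫ (F.map u ▷ d))
      = (adj.homEquiv (𝟙_ C) (F.obj E' ⊗ d))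
        (((Functor.Monoidal.εIso F).inv ≫ (0 : 𝟙_ D ⟶ F.obj E ⊗ d)) ≫ (F.map u ▷ d)) := by
    rw [adj.homEquiv_naturality_right, h1, ← adj.homEquiv_naturality_right]
  have h4 := (adj.homEquiv (𝟙_ C) (F.obj E' ⊗ d)).injective h3
  simp only [Limits.comp_zero, Limits.zero_comp, Category.assoc] at h4
  calc g ≫ (F.map u ▷ d)
      = (Functor.Monoidal.εIso F).hom ≫ (Functor.Monoidal.εIso F).inv ≫ g ≫ (F.map u ▷ d) := by simp
    _ = 0 := by rw [h4, Limits.comp_zero]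
end
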